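/- For r > 0 and r ≠ s > 0 with the setup of Φ[a,b,c,d], the vectors ζ₄ = (0,1)ᵀ ⊗ (0,0,0,1)ᵀ and ζ₅ = (1,0)ᵀ ⊗ (g, cd, 0, 0)ᵀ both lie in span P_r ∩ span P_s, where P_t = {x_α ⊗ y_α : |α| = t}. -/

import Mathlib

set_option maxHeartbeats 2000000 in

theorem zeta_in_intersection (a b c d e f g h k : ℝ)
    (ha : 0 < a) (hb : 0 < b) (hc : 0 < c) (hd : 0 < d) (hab : 1 < a * b)
    (hg : g = Real.sqrt (a * c * d))
    (he : e = a * (c + d) * c / (a * b - 1))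
    (hf : f = a * (c + d) * d / (a * b - 1))
    (hh : h = b * e - c ^ 2) (hk : k = b * f - d ^ 2)
    (r s : ℝ) (hr : 0 < r) (hs : 0 < s) (hrs : r ≠ s) :
    let z : ℂ → (Fin 2 × Fin 4 → ℂ) := fun α => fun p =>
      (![1, starRingEnd ℂ α] : Fin 2 → ℂ) p.1 *
      (![(g : ℂ) * α * (1 - α),
         α * ((h : ℂ) - (c : ℂ) * (d : ℂ) * (α + starRingEnd ℂ α) +
           (k : ℂ) * (‖α‖ : ℂ) ^ 2),
         -((e : ℂ) + (f : ℂ) * (‖α‖ : ℂ) ^ 2),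
         -(starRingEnd ℂ α) * ((c : ℂ) + (d : ℂ) * α)] : Fin 4 → ℂ) p.2
    let P : ℝ → Set (Fin 2 × Fin 4 → ℂ) := fun t =>
      {v | ∃ α : ℂ, ‖α‖ = t ∧ v = z α}
    let ζ₄ : Fin 2 × Fin 4 → ℂ := fun p =>
      (![0, 1] : Fin 2 → ℂ) p.1 * (![0, 0, 0, 1] : Fin 4 → ℂ) p.2
    let ζ₅ : Fin 2 × Fin 4 → ℂ := fun p =>
      (![1, 0] : Fin 2 → ℂ) p.1 * (![(g : ℂ), (c : ℂ) * (d : ℂ), 0, 0] : Fin 4 → ℂ) p.2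
    ζ₄ ∈ Submodule.span ℂ (P r) ⊓ Submodule.span ℂ (P s) ∧
      ζ₅ ∈ Submodule.span ℂ (P r) ⊓ Submodule.span ℂ (P s) := by
  intro z P ζ₄ ζ₅
  have h3 : Complex.I ^ 3 = -Complex.I := by rw [pow_succ, Complex.I_sq]; ring
  have h4I : Complex.I ^ 4 = 1 := by rw [pow_succ, h3]; simp [Complex.I_mul_I]
  have main : ∀ t : ℝ, 0 < t →
      ζ₄ ∈ Submodule.span ℂ (P t) ∧ ζ₅ ∈ Submodule.span ℂ (P t) := by
    intro t ht
    set u : Fin 5 → ℂ := ![1, -1, Complex.I, -Complex.I, (3+4*Complex.I)/5] with hu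
    have habs5 : ‖((3+4*Complex.I)/5 : ℂ)‖ = 1 := by
      rw [norm_div]
      have : ‖(3+4*Complex.I : ℂ)‖ = 5 := by
        rw [Complex.norm_def]
        have : Complex.normSq (3+4*Complex.I) = 25 := by
          simp [Complex.normSq_apply]; norm_num
        rw [this, show (25:ℝ) = 5^2 by norm_num, Real.sqrt_sq (by norm_num)]
      rw [this]; simp
    have habs : ∀ j : Fin 5, ‖(t:ℂ) * u j‖ = t := by
      intro j
      have h1 : ‖((t:ℂ))‖ = t := by
        rw [Complex.norm_real, Real.norm_eq_abs]; exact abs_of_pos ht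
      fin_cases j <;>
        simp [hu, map_mul, h1, Complex.norm_I, habs5, abs_of_pos ht,
          show ‖(3+4*Complex.I : ℂ)‖ = 5 by
            have h5 := habs5; rw [norm_div, div_eq_one_iff_eq (by norm_num)] at h5; simpa using h5]
    have hmem : ∀ j : Fin 5, z ((t:ℂ) * u j) ∈ Submodule.span ℂ (P t) :=
      fun j => Submodule.subset_span ⟨(t:ℂ) * u j, habs j, rfl⟩
    have htne : ((-48 : ℂ) * (c:ℝ) * (t:ℝ)^2) ≠ 0 := by
      intro hcon
      have : (c:ℂ) ≠ 0 := Complex.ofReal_ne_zero.2 hc.ne'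
      have ht' : ((t:ℝ):ℂ) ≠ 0 := Complex.ofReal_ne_zero.2 ht.ne'
      simpa [this, ht', pow_eq_zero_iff] using hcon
    have htne' : ((-48 : ℂ) * (t:ℝ)^2) ≠ 0 := by
      have ht' : ((t:ℝ):ℂ) ≠ 0 := Complex.ofReal_ne_zero.2 ht.ne'
      simp [ht', pow_eq_zero_iff]
    constructor
    · -- ζ₄
      set W : Fin 5 → ℂ := ![6-12*Complex.I, 6+3*Complex.I, -6-18*Complex.I,
        -6+2*Complex.I, 25*Complex.I] with hW
      have key : (∑ j : Fin 5, W j • z ((t:ℂ) * u j))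
          = ((-48 : ℂ) * (c:ℝ) * (t:ℝ)^2) • ζ₄ := by
        funext p
        obtain ⟨i, jj⟩ := p
        simp only [Finset.sum_apply, Pi.smul_apply, smul_eq_mul, z, ζ₄]
        simp only [habs]
        fin_cases i <;> fin_cases jj <;>
          (simp [hW, hu, Fin.sum_univ_five, Matrix.cons_val_zero, Matrix.cons_val_one,
            Matrix.head_cons, Matrix.cons_val_two, Matrix.tail_cons, Matrix.cons_val_three,
            Matrix.cons_val_four, map_mul, map_div₀, map_add, map_neg, map_one, map_ofNat,
            Complex.conj_I, Complex.conj_ofReal]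
           try ring_nf
           try simp only [Complex.I_sq, h3, h4I]
           try ring_nf
           try ring)
      have h1 : ((-48 : ℂ) * (c:ℝ) * (t:ℝ)^2) • ζ₄ ∈ Submodule.span ℂ (P t) := by
        rw [← key]
        exact Submodule.sum_smul_mem _ _ (fun j _ => hmem j)
      have h2 := Submodule.smul_mem _ (((-48 : ℂ) * (c:ℝ) * (t:ℝ)^2))⁻¹ h1
      rwa [inv_smul_smul₀ htne] at h2
    · -- ζ₅
      set W : Fin 5 → ℂ := ![6+12*Complex.I, 6-3*Complex.I, -6+18*Complex.I,
        -6-2*Complex.I, -25*Complex.I] with hW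
      have key : (∑ j : Fin 5, W j • z ((t:ℂ) * u j))
          = ((-48 : ℂ) * (t:ℝ)^2) • ζ₅ := by
        funext p
        obtain ⟨i, jj⟩ := p
        simp only [Finset.sum_apply, Pi.smul_apply, smul_eq_mul, z, ζ₅]
        simp only [habs]
        fin_cases i <;> fin_cases jj <;>
          (simp [hW, hu, Fin.sum_univ_five, Matrix.cons_val_zero, Matrix.cons_val_one,
            Matrix.head_cons, Matrix.cons_val_two, Matrix.tail_cons, Matrix.cons_val_three,
            Matrix.cons_val_four, map_mul, map_div₀, map_add, map_neg, map_one, map_ofNat,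
            Complex.conj_I, Complex.conj_ofReal]
           try ring_nf
           try simp only [Complex.I_sq, h3, h4I]
           try ring_nf
           try ring)
      have h1 : ((-48 : ℂ) * (t:ℝ)^2) • ζ₅ ∈ Submodule.span ℂ (P t) := by
        rw [← key]
        exact Submodule.sum_smul_mem _ _ (fun j _ => hmem j)
      have h2 := Submodule.smul_mem _ (((-48 : ℂ) * (t:ℝ)^2))⁻¹ h1
      rwa [inv_smul_smul₀ htne'] at h2
  exact ⟨⟨(main r hr).1, (main s hs).1⟩, ⟨(main r hr).2, (main s hs).2⟩⟩
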